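/- For rationals s, a, b, the remainder of P_s(x) upon Euclidean division by x^2 + ax + b equals (b^2 + u(s,a)·b + v(s,a))·x + (m(s,a)·b^2 + n(s,a)·b - s^5), where u(s,a) = -3a^2 + (12-4s^2-2s)a + (-s^4+14s^3-4s^2-10s-1), v(s,a) = a^4 + (2s^2+s-6)a^3 + (s^4-14s^3+4s^2+10s+1)a^2 + (s^5+10s^4+4s^3-14s^2+s)a + (-6s^5+s^4+2s^3), m(s,a) = -2a-2s^2-s+6, and n(s,a) = a^3 + (2s^2+s-6)a^2 + (s^4-14s^3+4s^2+10s+1)a + (s^5+10s^4+4s^3-14s^2+s). -/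
import Mathlib


noncomputable section
open Polynomial

def uu (s a : ℚ) : ℚ :=
  -3*a^2 + (12 - 4*s^2 - 2*s)*a + (-s^4 + 14*s^3 - 4*s^2 - 10*s - 1)

def vv (s a : ℚ) : ℚ :=
  a^4 + (2*s^2 + s - 6)*a^3 + (s^4 - 14*s^3 + 4*s^2 + 10*s + 1)*a^2
    + (s^5 + 10*s^4 + 4*s^3 - 14*s^2 + s)*a + (-6*s^5 + s^4 + 2*s^3)

def mm (s a : ℚ) : ℚ := -2*a - 2*s^2 - s + 6

def nn (s a : ℚ) : ℚ :=
  a^3 + (2*s^2 + s - 6)*a^2 + (s^4 - 14*s^3 + 4*s^2 + 10*s + 1)*a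
    + (s^5 + 10*s^4 + 4*s^3 - 14*s^2 + s)

def LL (s a : ℚ) : ℚ := nn s a - mm s a * uu s a

def CC (s a : ℚ) : ℚ := mm s a * vv s a + s^5

def FF (s a : ℚ) : ℚ :=
  CC s a ^ 2 + uu s a * LL s a * CC s a + vv s a * LL s a ^ 2

def Ppoly (s : ℚ) : Polynomial ℚ :=
  X^5 + C ((2 + s) * (3 - 2*s)) * X^4
    + C (1 + 10*s + 4*s^2 - 14*s^3 + s^4) * X^3
    - C (s * (1 - 14*s + 4*s^2 + 10*s^3 + s^4)) * X^2
    - C (s^3 * (1 + 2*s) * (-2 + 3*s)) * X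
    - C (s^5)

-- quotient coefficients via synthetic division
def q3 (s a : ℚ) : ℚ := (2 + s) * (3 - 2*s) - a
def q2 (s a b : ℚ) : ℚ := (1 + 10*s + 4*s^2 - 14*s^3 + s^4) - a * q3 s a - b
def q1 (s a b : ℚ) : ℚ := -(s * (1 - 14*s + 4*s^2 + 10*s^3 + s^4)) - a * q2 s a b - b * q3 s a

theorem stmt3 (s a b : ℚ) :
    Ppoly s %ₘ (X^2 + C a * X + C b) =
      C (b^2 + uu s a * b + vv s a) * X + C (mm s a * b^2 + nn s a * b - s^5) := by
  have hmonic : (X^2 + C a * X + C b : Polynomial ℚ).Monic := by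
    have h1 : ((C a * X + C b : Polynomial ℚ)).degree < 2 :=
      lt_of_le_of_lt degree_linear_le (by norm_num)
    simpa [add_assoc] using monic_X_pow_add (n := 2) h1
  have hdeg : (X^2 + C a * X + C b : Polynomial ℚ).degree = 2 := by
    compute_degree!
  have key : Ppoly s =
      (X^2 + C a * X + C b) *
        (X^3 + C (q3 s a) * X^2 + C (q2 s a b) * X + C (q1 s a b))
      + (C (b^2 + uu s a * b + vv s a) * X + C (mm s a * b^2 + nn s a * b - s^5)) := by
    simp only [Ppoly, q1, q2, q3, uu, vv, mm, nn, map_add, map_mul, map_sub, map_neg,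
      map_pow, map_one, map_ofNat]
    ring
  have hdvd : (X^2 + C a * X + C b : Polynomial ℚ) ∣
      Ppoly s - (C (b^2 + uu s a * b + vv s a) * X + C (mm s a * b^2 + nn s a * b - s^5)) := by
    exact ⟨X^3 + C (q3 s a) * X^2 + C (q2 s a b) * X + C (q1 s a b), by rw [key]; ring⟩
  rw [modByMonic_eq_of_dvd_sub hmonic hdvd,
    (modByMonic_eq_self_iff hmonic).2]
  rw [hdeg]
  exact lt_of_le_of_lt degree_linear_le (by norm_num)
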